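/- Suppose for every r > 0 and T > 0, P[sup_{u ∈ V_T(r)} Z_T(u) ≥ exp(−r^{2−ε_L})] ≤ C_L/r^L for constants C_L > 0 and ε_L ∈ (0,1), where V_T(r) = {u ∈ U_T : |u| ≥ r}. Assume the penalty satisfies: p(0)=0, p ≥ 0, p differentiable off 0, p bounded near 0, and the weights satisfy sup_T |α_T^j ξ_T^j| ≤ c₀ a.s. for all j with θ*_j ≠ 0. Then there exist C'_L > 0 and ε'_L ∈ (0,1) such that P[sup_{u ∈ V_T(r)} Z†_T(u) ≥ exp(−r^{2−ε'_L})] ≤ C'_L/r^L for all r > 0 and T > 0, where Z†_T(u) = Z_T(u)·exp(−∑_j ξ_T^j [p(θ*_j + (a_T u)_j) − p(θ*_j)]). -/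

import Mathlib

open MeasureTheory Set

private lemma sup2_le {E : Type*} {S : Set E} {f : E → ℝ} {c : ℝ} (hc : 0 ≤ c)
    (h : ∀ u ∈ S, f u ≤ c) : (⨆ u ∈ S, f u) ≤ c :=
  Real.iSup_le (fun u => Real.iSup_le (fun hu => h u hu) hc) hc

private lemma le_sup2 {E : Type*} {S : Set E} {f : E → ℝ} {b : ℝ}
    (hb : ∀ u ∈ S, f u ≤ b) {u : E} (hu : u ∈ S) : f u ≤ ⨆ v ∈ S, f v := by
  have hbdd : BddAbove (Set.range fun v => ⨆ (_ : v ∈ S), f v) := by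
    refine ⟨max b 0, ?_⟩
    rintro y ⟨v, rfl⟩
    show (⨆ (_ : v ∈ S), f v) ≤ max b 0
    by_cases hv : v ∈ S
    · rw [ciSup_pos (f := fun _ => f v) hv]; exact le_max_of_le_left (hb v hv)
    · have : IsEmpty (v ∈ S) := ⟨hv⟩
      rw [Real.iSup_of_isEmpty]
      exact le_max_right _ _
  calc f u = ⨆ (_ : u ∈ S), f u := (ciSup_pos (f := fun _ => f u) hu).symm
    _ ≤ ⨆ v ∈ S, f v := le_ciSup hbdd u

private lemma sup2_eq_zero {E : Type*} {S : Set E} {f : E → ℝ}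
    (h : ¬ BddAbove (f '' S)) : (⨆ u ∈ S, f u) = 0 := by
  apply Real.iSup_of_not_bddAbove
  rintro ⟨b, hb⟩
  apply h
  refine ⟨b, ?_⟩
  rintro y ⟨v, hv, rfl⟩
  have hfv : f v = ⨆ (_ : v ∈ S), f v := (ciSup_pos (f := fun _ => f v) hv).symm
  rw [hfv]
  exact hb ⟨v, rfl⟩

private lemma abs_coord_le_norm {d : ℕ} (x : EuclideanSpace ℝ (Fin d)) (j : Fin d) :
    |x j| ≤ ‖x‖ := by
  rw [EuclideanSpace.norm_eq, ← Real.sqrt_sq_eq_abs]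
  apply Real.sqrt_le_sqrt
  have : ∀ i : Fin d, ‖x i‖ ^ 2 = x i ^ 2 := fun i => by rw [Real.norm_eq_abs, sq_abs]
  simp only [this]
  exact Finset.single_le_sum (f := fun i => x i ^ 2) (fun i _ => sq_nonneg _) (Finset.mem_univ j)


private lemma pldi_arith {x y z t Kc r s : ℝ} (hr1 : 1 ≤ r) (ht1 : 1 ≤ t)
    (hKc0 : 0 ≤ Kc) (hx0 : 0 ≤ x) (h3 : 3 * x ≤ y) (h6 : (6 * Kc + 3) * r ≤ y)
    (hs : Kc * s ≤ 2 * Kc * (t * r)) (hty : t * y ≤ z) :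
    x + 1 + Kc * s ≤ z := by
  have hy0 : 0 ≤ y := by nlinarith
  have hS : x + 2 * Kc * r + 1 ≤ y := by nlinarith
  have hprod : 0 ≤ (t - 1) * (x + 1) :=
    mul_nonneg (by linarith) (by linarith)
  have hmul : t * (x + 2 * Kc * r + 1) ≤ t * y :=
    mul_le_mul_of_nonneg_left hS (by linarith)
  nlinarith [hprod, hmul, hs, hty]

set_option maxHeartbeats 1000000 in
/-- Theorem 1: the penalty does not disturb the polynomial type large deviation inequality.
`Θ ⊂ ℝ^p` bounded open, `θ*` the true value, `a_T` the diagonal rate matrix with entries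
`α T j`, `U_T = {u : θ* + a_T u ∈ cl Θ}`, `V_T(r) = {u ∈ U_T : |u| ≥ r}`,
`Z_T(u) = exp(H_T(θ*+a_T u) − H_T(θ*))` and
`Z†_T(u) = Z_T(u)·exp(−∑_j ξ_T^j [p(θ*_j + (a_T u)_j) − p(θ*_j)])`. -/
theorem pldi_penalized
    {Ω : Type*} [MeasurableSpace Ω] (P : Measure Ω) [IsProbabilityMeasure P]
    (d : ℕ) (Θ : Set (EuclideanSpace ℝ (Fin d))) (hΘo : IsOpen Θ)
    (hΘb : Bornology.IsBounded Θ)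
    (θs : EuclideanSpace ℝ (Fin d)) (hθs : θs ∈ Θ)
    (α : ℝ → Fin d → ℝ) (hα : ∀ T j, α T j ≠ 0)
    (H : ℝ → Ω → EuclideanSpace ℝ (Fin d) → ℝ)
    (U : ℝ → Set (EuclideanSpace ℝ (Fin d)))
    (hU : ∀ T, U T = {u | (WithLp.toLp 2 (fun j => θs j + α T j * u j) : EuclideanSpace ℝ (Fin d)) ∈ closure Θ})
    (Z : ℝ → Ω → EuclideanSpace ℝ (Fin d) → ℝ)
    (hZ : ∀ T ω u, Z T ω u =
      Real.exp (H T ω (WithLp.toLp 2 (fun j => θs j + α T j * u j)) - H T ω θs))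
    (L C_L εL : ℝ) (hL : 0 < L) (hCL : 0 < C_L) (hεL : εL ∈ Ioo (0 : ℝ) 1)
    (hPLDI : ∀ r > (0 : ℝ), ∀ T > (0 : ℝ),
      P {ω | Real.exp (-(r ^ (2 - εL))) ≤ ⨆ u ∈ {u ∈ U T | r ≤ ‖u‖}, Z T ω u}
        ≤ ENNReal.ofReal (C_L / r ^ L))
    (p : ℝ → ℝ) (hp0 : p 0 = 0) (hpnn : ∀ x, 0 ≤ p x)
    (hpdiff : ∀ x : ℝ, x ≠ 0 → DifferentiableAt ℝ p x)
    (hpbd : ∃ ε > (0 : ℝ), BddAbove (p '' Ioo (-ε) ε))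
    (ξ : ℝ → Ω → Fin d → ℝ) (hξpos : ∀ T ω j, 0 < ξ T ω j)
    (c₀ : ℝ) (hc₀ : 0 < c₀)
    (hA4 : ∀ j, θs j ≠ 0 → ∀ᵐ ω ∂P, ∀ T, |α T j * ξ T ω j| ≤ c₀)
    (Zd : ℝ → Ω → EuclideanSpace ℝ (Fin d) → ℝ)
    (hZd : ∀ T ω u, Zd T ω u = Z T ω u *
      Real.exp (-(∑ j, ξ T ω j * (p (θs j + α T j * u j) - p (θs j))))) :
    ∃ C'_L > (0 : ℝ), ∃ ε'L ∈ Ioo (0 : ℝ) 1, ∀ r > (0 : ℝ), ∀ T > (0 : ℝ),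
      P {ω | Real.exp (-(r ^ (2 - ε'L))) ≤ ⨆ u ∈ {u ∈ U T | r ≤ ‖u‖}, Zd T ω u}
        ≤ ENNReal.ofReal (C'_L / r ^ L) := by
  classical
  obtain ⟨hεL0, hεL1⟩ := hεL
  -- a radius bound for the closure of Θ
  obtain ⟨R₀, hR₀⟩ := hΘb.closure.subset_closedBall 0
  set R : ℝ := max R₀ 1 with hRdef
  have hR1 : (1:ℝ) ≤ R := le_max_right _ _
  have hRmem : ∀ x ∈ closure Θ, ∀ j, |x j| ≤ R := by
    intro x hx j
    have hx' := hR₀ hx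
    rw [Metric.mem_closedBall, dist_zero_right] at hx'
    exact le_trans (abs_coord_le_norm x j) (le_trans hx' (le_max_left _ _))
  -- a bound for p on [-R, R]
  have hMex : ∃ M : ℝ, 0 ≤ M ∧ ∀ x : ℝ, |x| ≤ R → p x ≤ M := by
    obtain ⟨ε, hεpos, M₀, hM₀⟩ := hpbd
    set S : Set ℝ := Icc (-R) R ∩ {x : ℝ | ε/2 ≤ |x|} with hSdef
    have hScomp : IsCompact S :=
      isCompact_Icc.inter_right (isClosed_le continuous_const continuous_abs)
    have hScont : ContinuousOn p S := by
      intro x hx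
      have hxne : x ≠ 0 := by
        intro h0
        have := hx.2
        rw [h0] at this
        simp only [mem_setOf_eq, abs_zero] at this
        linarith
      exact (hpdiff x hxne).continuousAt.continuousWithinAt
    obtain ⟨M₁, hM₁⟩ := (hScomp.image_of_continuousOn hScont).bddAbove
    refine ⟨max M₀ M₁, ?_, ?_⟩
    · have h0mem : (0:ℝ) ∈ Ioo (-ε) ε := by rw [mem_Ioo]; constructor <;> linarith
      have h0 : p 0 ≤ M₀ := hM₀ ⟨0, h0mem, rfl⟩
      rw [hp0] at h0
      exact le_trans h0 (le_max_left _ _)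
    · intro x hx
      by_cases hc : |x| < ε/2
      · refine le_trans (hM₀ ⟨x, ?_, rfl⟩) (le_max_left _ _)
        rw [mem_Ioo, ← abs_lt]
        linarith
      · refine le_trans (hM₁ ⟨x, ⟨?_, not_lt.mp hc⟩, rfl⟩) (le_max_right _ _)
        rw [mem_Icc, ← abs_le]
        exact hx
  obtain ⟨M, hM0, hM⟩ := hMex
  -- local Lipschitz property of p at each nonzero θs j
  have hlip : ∀ j : Fin d, ∃ δ > (0:ℝ), ∃ K ≥ (0:ℝ),
      ∀ h : ℝ, |h| ≤ δ → θs j ≠ 0 → |p (θs j + h) - p (θs j)| ≤ K * |h| := by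
    intro j
    by_cases hj : θs j = 0
    · exact ⟨1, one_pos, 0, le_refl 0, fun h _ hne => absurd hj hne⟩
    · have hd := (hpdiff _ hj).hasDerivAt
      set c := deriv p (θs j) with hcdef
      rw [hasDerivAt_iff_isLittleO] at hd
      have hev := (Asymptotics.isLittleO_iff.mp hd) one_pos
      rw [Metric.eventually_nhds_iff] at hev
      obtain ⟨δ, hδpos, hδ⟩ := hev
      refine ⟨δ/2, by linarith, |c| + 1, by positivity, fun h hh _ => ?_⟩
      have hdist : dist (θs j + h) (θs j) < δ := by
        rw [Real.dist_eq]
        have : θs j + h - θs j = h := by ring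
        rw [this]
        calc |h| ≤ δ/2 := hh
          _ < δ := by linarith
      have hy := hδ hdist
      rw [Real.norm_eq_abs, Real.norm_eq_abs, one_mul] at hy
      have h1 : θs j + h - θs j = h := by ring
      rw [h1] at hy
      -- hy : |p (θs j + h) - p (θs j) - h • c| ≤ |h|
      rw [smul_eq_mul] at hy
      have h2 : p (θs j + h) - p (θs j) = (p (θs j + h) - p (θs j) - h * c) + h * c := by ring
      calc |p (θs j + h) - p (θs j)|
          ≤ |p (θs j + h) - p (θs j) - h * c| + |h * c| := by
            conv_lhs => rw [h2]
            exact abs_add_le _ _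
        _ ≤ |h| + |c| * |h| := by
            rw [abs_mul]
            have := abs_nonneg h
            have := abs_nonneg c
            nlinarith [hy]
        _ = (|c| + 1) * |h| := by ring
  choose δ hδpos K hK0 hKlip using hlip
  -- the penalty slope constant
  set B : Fin d → ℝ := fun j => c₀ * K j + c₀ * M / δ j with hBdef
  have hB0 : ∀ j, 0 ≤ B j := by
    intro j
    have := hK0 j
    have := hδpos j
    have : 0 ≤ c₀ * M / δ j := by positivity
    have : 0 ≤ c₀ * K j := by positivity
    simp only [hBdef]
    linarith
  set Kc : ℝ := ∑ j, B j with hKcdef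
  have hKc0 : 0 ≤ Kc := Finset.sum_nonneg fun j _ => hB0 j
  -- choose the new exponent
  set ε' : ℝ := (1 + εL) / 2 with hε'def
  have hε'mem : ε' ∈ Ioo (0:ℝ) 1 := ⟨by simp only [hε'def]; linarith, by simp only [hε'def]; linarith⟩
  have hβγ : 0 < (2 - εL) - (2 - ε') := by simp only [hε'def]; linarith
  have hβ1 : 0 < (2 - εL) - 1 := by linarith
  have hβge1 : 1 ≤ 2 - εL := by linarith
  -- choose the threshold r₀
  have hE0 : ∀ᶠ r : ℝ in Filter.atTop, 1 ≤ r := Filter.eventually_ge_atTop 1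
  have hE1 : ∀ᶠ r : ℝ in Filter.atTop, 3 ≤ r ^ ((2 - εL) - (2 - ε')) :=
    (tendsto_rpow_atTop hβγ).eventually_ge_atTop 3
  have hE2 : ∀ᶠ r : ℝ in Filter.atTop, 6 * Kc + 3 ≤ r ^ ((2 - εL) - 1) :=
    (tendsto_rpow_atTop hβ1).eventually_ge_atTop (6 * Kc + 3)
  obtain ⟨r₁, hr₁⟩ := Filter.eventually_atTop.mp (hE0.and (hE1.and hE2))
  set r₀ : ℝ := max r₁ 1 with hr₀def
  have hr₀1 : (1:ℝ) ≤ r₀ := le_max_right _ _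
  have hr₀pos : (0:ℝ) < r₀ := by linarith
  -- the geometric ratio
  set q : ℝ := ((2:ℝ) ^ L)⁻¹ with hqdef
  have h2L1 : (1:ℝ) < (2:ℝ) ^ L :=
    (Real.one_lt_rpow_iff_of_pos two_pos).mpr (Or.inl ⟨one_lt_two, hL⟩)
  have hq0 : 0 ≤ q := by positivity
  have hq1 : q < 1 := by
    rw [hqdef, inv_lt_one_iff₀]
    right; exact h2L1
  -- the new constant
  set C' : ℝ := max (r₀ ^ L) (C_L * (1 - q)⁻¹) with hC'def
  have hr₀L : (0:ℝ) < r₀ ^ L := Real.rpow_pos_of_pos hr₀pos L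
  have hC'pos : 0 < C' := lt_max_iff.mpr (Or.inl hr₀L)
  refine ⟨C', hC'pos, ε', hε'mem, ?_⟩
  intro r hr T hT
  rcases lt_or_ge r r₀ with hsmall | hbig
  · -- small r : use that P is a probability measure
    calc P _ ≤ 1 := prob_le_one
      _ ≤ ENNReal.ofReal (C' / r ^ L) := by
          rw [ENNReal.one_le_ofReal, le_div_iff₀ (Real.rpow_pos_of_pos hr L), one_mul]
          calc r ^ L ≤ r₀ ^ L := Real.rpow_le_rpow hr.le hsmall.le hL.le
            _ ≤ C' := le_max_left _ _
  · -- large r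
    have hrpos : 0 < r := hr
    have hr1 : (1:ℝ) ≤ r := le_trans hr₀1 hbig
    obtain ⟨-, h3, h6⟩ := hr₁ r (le_trans (le_max_left _ _) hbig)
    -- the good event
    set G : Set Ω := {ω | ∀ j, θs j ≠ 0 → ∀ T', |α T' j * ξ T' ω j| ≤ c₀} with hGdef
    have hGnull : P Gᶜ = 0 := by
      have hGa : ∀ᵐ ω ∂P, ∀ j, θs j ≠ 0 → ∀ T', |α T' j * ξ T' ω j| ≤ c₀ := by
        rw [ae_all_iff]
        intro j
        by_cases hj : θs j = 0
        · exact Filter.Eventually.of_forall fun ω hne => absurd hj hne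
        · exact (hA4 j hj).mono fun ω h _ => h
      exact hGa
    -- the union events
    set A : ℕ → Set Ω := fun n =>
      {ω | Real.exp (-(((2:ℝ) ^ n * r) ^ (2 - εL))) ≤
        ⨆ u ∈ {u ∈ U T | (2:ℝ) ^ n * r ≤ ‖u‖}, Z T ω u} with hAdef
    have hkey : {ω | Real.exp (-(r ^ (2 - ε'))) ≤ ⨆ u ∈ {u ∈ U T | r ≤ ‖u‖}, Zd T ω u}
        ⊆ (⋃ n : ℕ, A n) ∪ Gᶜ := by
      intro ω hωE
      by_cases hωG : ω ∈ G
      swap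
      · exact Or.inr hωG
      left
      rw [mem_iUnion]
      by_contra hno
      push_neg at hno
      simp only [hAdef, mem_setOf_eq, not_le] at hno
      replace hωE : Real.exp (-(r ^ (2 - ε'))) ≤
          ⨆ u ∈ {u ∈ U T | r ≤ ‖u‖}, Zd T ω u := hωE
      -- coordinate bounds
      have hθR : ∀ j, |θs j| ≤ R := hRmem θs (subset_closure hθs)
      have hcoord : ∀ u ∈ U T, ∀ j, |θs j + α T j * u j| ≤ R := by
        intro u hu j
        rw [hU T] at hu
        exact hRmem _ hu j
      -- lower bound for the penalty on the good event
      have hpen_lb : ∀ u ∈ U T,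
          -(Kc * ‖u‖) ≤ ∑ j, ξ T ω j * (p (θs j + α T j * u j) - p (θs j)) := by
        intro u hu
        have hsum : -(Kc * ‖u‖) = ∑ j, -(B j * ‖u‖) := by
          rw [hKcdef, Finset.sum_mul, ← Finset.sum_neg_distrib]
        rw [hsum]
        apply Finset.sum_le_sum
        intro j _
        have hξj : 0 < ξ T ω j := hξpos T ω j
        have huj : |u j| ≤ ‖u‖ := abs_coord_le_norm u j
        have hxh : |θs j + α T j * u j| ≤ R := hcoord u hu j
        have hx : |θs j| ≤ R := hθR j
        have hun : 0 ≤ ‖u‖ := norm_nonneg u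
        have hujn : 0 ≤ |u j| := abs_nonneg _
        by_cases hj : θs j = 0
        · have h1 : 0 ≤ p (θs j + α T j * u j) - p (θs j) := by
            rw [hj, hp0, zero_add, sub_zero]
            exact hpnn _
          have h2 : 0 ≤ ξ T ω j * (p (θs j + α T j * u j) - p (θs j)) :=
            mul_nonneg hξj.le h1
          have h3 : 0 ≤ B j * ‖u‖ := mul_nonneg (hB0 j) hun
          linarith
        · have hαξ : |α T j * ξ T ω j| ≤ c₀ := hωG j hj T
          have habs : ξ T ω j * |α T j * u j| ≤ c₀ * |u j| := by
            have h1 : ξ T ω j * |α T j * u j| = |α T j * ξ T ω j| * |u j| := by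
              rw [abs_mul, abs_mul, abs_of_pos hξj]
              ring
            rw [h1]
            exact mul_le_mul_of_nonneg_right hαξ (abs_nonneg _)
          by_cases hcase : |α T j * u j| ≤ δ j
          · have hlipj := hKlip j (α T j * u j) hcase hj
            have h2 : -(K j * |α T j * u j|) ≤ p (θs j + α T j * u j) - p (θs j) :=
              neg_le_of_abs_le hlipj
            have hlow : -(ξ T ω j * (K j * |α T j * u j|)) ≤
                ξ T ω j * (p (θs j + α T j * u j) - p (θs j)) := by
              rw [← mul_neg]
              exact mul_le_mul_of_nonneg_left h2 hξj.le
            have hKabs : ξ T ω j * (K j * |α T j * u j|) ≤ c₀ * K j * |u j| := by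
              calc ξ T ω j * (K j * |α T j * u j|)
                  = K j * (ξ T ω j * |α T j * u j|) := by ring
                _ ≤ K j * (c₀ * |u j|) := mul_le_mul_of_nonneg_left habs (hK0 j)
                _ = c₀ * K j * |u j| := by ring
            have hBj : c₀ * K j * |u j| ≤ B j * ‖u‖ := by
              have h5 : c₀ * K j ≤ B j := by
                have hδj := hδpos j
                have h7 : 0 ≤ c₀ * M / δ j :=
                  div_nonneg (mul_nonneg hc₀.le hM0) (hδpos j).le
                simp only [hBdef]
                linarith
              calc c₀ * K j * |u j| ≤ B j * |u j| :=
                    mul_le_mul_of_nonneg_right h5 hujn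
                _ ≤ B j * ‖u‖ := mul_le_mul_of_nonneg_left huj (hB0 j)
            linarith
          · push_neg at hcase
            have hξδ : ξ T ω j * δ j ≤ c₀ * |u j| := by
              calc ξ T ω j * δ j ≤ ξ T ω j * |α T j * u j| :=
                    mul_le_mul_of_nonneg_left hcase.le hξj.le
                _ ≤ c₀ * |u j| := habs
            have hpx : p (θs j) ≤ M := hM _ hx
            have hlow : -(ξ T ω j * p (θs j)) ≤
                ξ T ω j * (p (θs j + α T j * u j) - p (θs j)) := by
              rw [← mul_neg]
              refine mul_le_mul_of_nonneg_left ?_ hξj.le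
              have := hpnn (θs j + α T j * u j)
              linarith
            have hδj := hδpos j
            have h4 : ξ T ω j * p (θs j) ≤ c₀ * M / δ j * |u j| := by
              have h2 : ξ T ω j * p (θs j) ≤ ξ T ω j * M :=
                mul_le_mul_of_nonneg_left hpx hξj.le
              have h5 : ξ T ω j * M ≤ c₀ * M / δ j * |u j| := by
                rw [div_mul_eq_mul_div, le_div_iff₀ hδj]
                calc ξ T ω j * M * δ j = (ξ T ω j * δ j) * M := by ring
                  _ ≤ (c₀ * |u j|) * M := mul_le_mul_of_nonneg_right hξδ hM0
                  _ = c₀ * M * |u j| := by ring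
              linarith
            have hBj : c₀ * M / δ j * |u j| ≤ B j * ‖u‖ := by
              have h5 : c₀ * M / δ j ≤ B j := by
                have h7 : 0 ≤ c₀ * K j := mul_nonneg hc₀.le (hK0 j)
                simp only [hBdef]
                linarith
              have h6 : 0 ≤ c₀ * M / δ j :=
                div_nonneg (mul_nonneg hc₀.le hM0) hδj.le
              calc c₀ * M / δ j * |u j| ≤ B j * |u j| :=
                    mul_le_mul_of_nonneg_right h5 hujn
                _ ≤ B j * ‖u‖ := mul_le_mul_of_nonneg_left huj (hB0 j)
            exact le_trans (neg_le_neg (le_trans h4 hBj)) hlow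
      -- upper bound for the penalty
      have hpen_ub : ∀ u ∈ U T,
          ∑ j, ξ T ω j * (p (θs j + α T j * u j) - p (θs j)) ≤ (∑ j, ξ T ω j) * M := by
        intro u hu
        rw [Finset.sum_mul]
        apply Finset.sum_le_sum
        intro j _
        have hξj := hξpos T ω j
        have h1 : p (θs j + α T j * u j) ≤ M := hM _ (hcoord u hu j)
        have h2 : 0 ≤ p (θs j) := hpnn _
        have h3 : p (θs j + α T j * u j) - p (θs j) ≤ M := by linarith
        exact mul_le_mul_of_nonneg_left h3 hξj.le
      -- the sup must be bounded and attained on a nonempty set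
      by_cases hbdd : BddAbove (Zd T ω '' {u ∈ U T | r ≤ ‖u‖})
      swap
      · rw [sup2_eq_zero hbdd] at hωE
        exact absurd hωE (not_le.mpr (Real.exp_pos _))
      obtain ⟨W, hW⟩ := hbdd
      by_cases hne : ∃ u, u ∈ {u ∈ U T | r ≤ ‖u‖}
      swap
      · have h0 : (⨆ u ∈ {u ∈ U T | r ≤ ‖u‖}, Zd T ω u) ≤ 0 :=
          sup2_le le_rfl (fun u hu => absurd ⟨u, hu⟩ hne)
        have := hωE.trans h0
        linarith [Real.exp_pos (-(r ^ (2 - ε')))]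
      obtain ⟨u₀, hu₀⟩ := hne
      have hZdpos : ∀ u, 0 < Zd T ω u := by
        intro u
        rw [hZd, hZ]
        positivity
      have hW0 : 0 ≤ W := le_trans (hZdpos u₀).le (hW ⟨u₀, hu₀, rfl⟩)
      have hZub : ∀ n : ℕ, ∀ u ∈ {u ∈ U T | (2:ℝ) ^ n * r ≤ ‖u‖},
          Z T ω u ≤ W * Real.exp ((∑ j, ξ T ω j) * M) := by
        intro n u hu
        have h2n1 : (1:ℝ) ≤ 2 ^ n := one_le_pow₀ one_le_two
        have huV : u ∈ {u ∈ U T | r ≤ ‖u‖} := by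
          refine ⟨hu.1, ?_⟩
          calc r = 1 * r := (one_mul r).symm
            _ ≤ 2 ^ n * r := mul_le_mul_of_nonneg_right h2n1 hrpos.le
            _ ≤ ‖u‖ := hu.2
        have hz : Z T ω u = Zd T ω u *
            Real.exp (∑ j, ξ T ω j * (p (θs j + α T j * u j) - p (θs j))) := by
          rw [hZd, mul_assoc, ← Real.exp_add, neg_add_cancel, Real.exp_zero, mul_one]
        rw [hz]
        calc Zd T ω u * Real.exp (∑ j, ξ T ω j * (p (θs j + α T j * u j) - p (θs j)))
            ≤ W * Real.exp (∑ j, ξ T ω j * (p (θs j + α T j * u j) - p (θs j))) :=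
              mul_le_mul_of_nonneg_right (hW ⟨u, huV, rfl⟩) (Real.exp_pos _).le
          _ ≤ W * Real.exp ((∑ j, ξ T ω j) * M) :=
              mul_le_mul_of_nonneg_left (Real.exp_le_exp.mpr (hpen_ub u hu.1)) hW0
      -- pointwise bound on V r
      have hpt : ∀ u ∈ {u ∈ U T | r ≤ ‖u‖},
          Zd T ω u ≤ Real.exp (-(r ^ (2 - ε')) - 1) := by
        intro u hu
        have hs1 : (1:ℝ) ≤ ‖u‖ / r := (one_le_div hrpos).mpr hu.2
        obtain ⟨n, hn1, hn2⟩ := exists_nat_pow_near hs1 one_lt_two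
        have hn1' : (2:ℝ) ^ n * r ≤ ‖u‖ := by
          rw [← le_div_iff₀ hrpos]
          exact hn1
        have hn2' : ‖u‖ < (2:ℝ) ^ (n + 1) * r := (div_lt_iff₀ hrpos).mp hn2
        have huVn : u ∈ {u ∈ U T | (2:ℝ) ^ n * r ≤ ‖u‖} := ⟨hu.1, hn1'⟩
        have hZu : Z T ω u < Real.exp (-(((2:ℝ) ^ n * r) ^ (2 - εL))) :=
          lt_of_le_of_lt (le_sup2 (hZub n) huVn) (hno n)
        have hpen := hpen_lb u hu.1
        have t1 : (1:ℝ) ≤ (2:ℝ) ^ n := one_le_pow₀ one_le_two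
        have harta : r ^ (2 - ε') + 1 + Kc * ‖u‖ ≤ ((2:ℝ) ^ n * r) ^ (2 - εL) := by
          have hγ0 : 0 ≤ r ^ (2 - ε') := Real.rpow_nonneg hrpos.le _
          have hβ0 : 0 ≤ r ^ (2 - εL) := Real.rpow_nonneg hrpos.le _
          have h3' : 3 * r ^ (2 - ε') ≤ r ^ (2 - εL) := by
            have he : r ^ (2 - εL) = r ^ ((2 - εL) - (2 - ε')) * r ^ (2 - ε') := by
              rw [← Real.rpow_add hrpos]
              congr 1
              ring
            rw [he]
            exact mul_le_mul_of_nonneg_right h3 hγ0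
          have h6' : (6 * Kc + 3) * r ≤ r ^ (2 - εL) := by
            have he : r ^ (2 - εL) = r ^ ((2 - εL) - 1) * r := by
              conv_lhs => rw [show (2 - εL) = ((2 - εL) - 1) + 1 by ring]
              rw [Real.rpow_add hrpos, Real.rpow_one]
            rw [he]
            exact mul_le_mul_of_nonneg_right h6 hrpos.le
          have hKcu : Kc * ‖u‖ ≤ 2 * Kc * ((2:ℝ) ^ n * r) := by
            calc Kc * ‖u‖ ≤ Kc * ((2:ℝ) ^ (n + 1) * r) :=
                mul_le_mul_of_nonneg_left hn2'.le hKc0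
              _ = 2 * Kc * ((2:ℝ) ^ n * r) := by ring
          have htβ : (2:ℝ) ^ n * r ^ (2 - εL) ≤ ((2:ℝ) ^ n * r) ^ (2 - εL) := by
            rw [Real.mul_rpow (by positivity) hrpos.le]
            refine mul_le_mul_of_nonneg_right ?_ hβ0
            calc (2:ℝ) ^ n = ((2:ℝ) ^ n) ^ (1:ℝ) := (Real.rpow_one _).symm
              _ ≤ ((2:ℝ) ^ n) ^ (2 - εL) := Real.rpow_le_rpow_of_exponent_le t1 hβge1
          exact pldi_arith hr1 t1 hKc0 hγ0 h3' h6' hKcu htβ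
        rw [hZd]
        have hexp : Real.exp (-(∑ j, ξ T ω j * (p (θs j + α T j * u j) - p (θs j)))) ≤
            Real.exp (Kc * ‖u‖) := Real.exp_le_exp.mpr (by linarith)
        calc Z T ω u * Real.exp (-(∑ j, ξ T ω j * (p (θs j + α T j * u j) - p (θs j))))
            ≤ Real.exp (-(((2:ℝ) ^ n * r) ^ (2 - εL))) * Real.exp (Kc * ‖u‖) :=
              le_of_lt (mul_lt_mul hZu hexp (Real.exp_pos _) (Real.exp_pos _).le)
          _ = Real.exp (-(((2:ℝ) ^ n * r) ^ (2 - εL)) + Kc * ‖u‖) := (Real.exp_add _ _).symm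
          _ ≤ Real.exp (-(r ^ (2 - ε')) - 1) := Real.exp_le_exp.mpr (by linarith)
      -- contradiction
      have hsup : (⨆ u ∈ {u ∈ U T | r ≤ ‖u‖}, Zd T ω u) ≤ Real.exp (-(r ^ (2 - ε')) - 1) :=
        sup2_le (Real.exp_pos _).le hpt
      have hc := hωE.trans hsup
      have hlt : Real.exp (-(r ^ (2 - ε')) - 1) < Real.exp (-(r ^ (2 - ε'))) :=
        Real.exp_lt_exp.mpr (by linarith)
      linarith
    calc P {ω | Real.exp (-(r ^ (2 - ε'))) ≤ ⨆ u ∈ {u ∈ U T | r ≤ ‖u‖}, Zd T ω u}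
        ≤ P ((⋃ n : ℕ, A n) ∪ Gᶜ) := measure_mono hkey
      _ ≤ P (⋃ n : ℕ, A n) + P Gᶜ := measure_union_le _ _
      _ = P (⋃ n : ℕ, A n) := by rw [hGnull, add_zero]
      _ ≤ ∑' n : ℕ, P (A n) := measure_iUnion_le _
      _ ≤ ∑' n : ℕ, ENNReal.ofReal (C_L / (((2:ℝ) ^ n * r) ^ L)) := by
          refine ENNReal.tsum_le_tsum fun n => ?_
          exact hPLDI ((2:ℝ) ^ n * r) (by positivity) T hT
      _ ≤ ENNReal.ofReal (C' / r ^ L) := by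
          have hrL : (0:ℝ) < r ^ L := Real.rpow_pos_of_pos hrpos L
          have hterm : ∀ n : ℕ, ENNReal.ofReal (C_L / (((2:ℝ) ^ n * r) ^ L)) =
              ENNReal.ofReal (C_L / r ^ L) * (ENNReal.ofReal q) ^ n := by
            intro n
            have h2n : ((2:ℝ) ^ n * r) ^ L = ((2:ℝ) ^ n) ^ L * r ^ L :=
              Real.mul_rpow (by positivity) hrpos.le
            have h2nL : ((2:ℝ) ^ n : ℝ) ^ L = ((2:ℝ) ^ L) ^ n := by
              rw [← Real.rpow_natCast (2:ℝ) n, ← Real.rpow_natCast ((2:ℝ) ^ L) n,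
                ← Real.rpow_mul (by norm_num), ← Real.rpow_mul (by norm_num), mul_comm]
            have h2Lpos : (0:ℝ) < (2:ℝ) ^ L := by linarith
            have hsplit : C_L / (((2:ℝ) ^ n * r) ^ L) = (C_L / r ^ L) * q ^ n := by
              rw [h2n, h2nL, hqdef, inv_pow]
              field_simp
            rw [hsplit, ENNReal.ofReal_mul (div_nonneg hCL.le hrL.le), ENNReal.ofReal_pow hq0]
          calc ∑' n : ℕ, ENNReal.ofReal (C_L / (((2:ℝ) ^ n * r) ^ L))
              = ENNReal.ofReal (C_L / r ^ L) * ∑' n : ℕ, (ENNReal.ofReal q) ^ n := by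
                simp_rw [hterm]
                rw [ENNReal.tsum_mul_left]
            _ = ENNReal.ofReal (C_L / r ^ L) * (1 - ENNReal.ofReal q)⁻¹ := by
                rw [ENNReal.tsum_geometric]
            _ = ENNReal.ofReal ((C_L / r ^ L) * (1 - q)⁻¹) := by
                rw [ENNReal.ofReal_mul (div_nonneg hCL.le hrL.le)]
                congr 1
                rw [← ENNReal.ofReal_one, ← ENNReal.ofReal_sub 1 hq0,
                  ← ENNReal.ofReal_inv_of_pos (by linarith)]
            _ ≤ ENNReal.ofReal (C' / r ^ L) := by
                apply ENNReal.ofReal_le_ofReal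
                rw [div_mul_eq_mul_div]
                gcongr
                exact le_max_right _ _
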